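/- Diffeomorphism between root sets: let N≥1 and t∈ℝ. For x ∈ A_N(t) let y^t(x) ∈ ℝ^N_< be the increasingly ordered roots of P_x − t. Then y^t(x) ∈ A_N(−t), and the map y^t : A_N(t) → A_N(−t) is a smooth diffeomorphism onto A_N(−t), with inverse y^{−t}. -/

import Mathlib

/-- The set `A_N(t)` of strictly increasing `x` such that `P_x − t` has `N` distinct
real roots, where `P_x(λ) = ∏_k (λ − x_k)`. -/
def ANt (N : ℕ) (t : ℝ) : Set (Fin N → ℝ) :=
  {x | StrictMono x ∧ ∃ y : Fin N → ℝ, StrictMono y ∧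
    ∀ z : ℝ, (∏ k, (z - x k)) - t = ∏ k, (z - y k)}

/-- The map `y^t` sending `x ∈ A_N(t)` to the increasingly ordered roots of `P_x − t`. -/
noncomputable def rootMap (N : ℕ) (t : ℝ) (x : Fin N → ℝ) : Fin N → ℝ := by
  classical
  exact
    if h : ∃ y : Fin N → ℝ, StrictMono y ∧
        ∀ z : ℝ, (∏ k, (z - x k)) - t = ∏ k, (z - y k)
    then h.choose else x

open Finset

/-- Two strictly monotone maps `Fin N → ℝ` with the same image are equal. -/
lemma strictMono_eq_of_image_eq {N : ℕ} {f g : Fin N → ℝ} (hf : StrictMono f)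
    (hg : StrictMono g) (h : image f univ = image g univ) : f = g := by
  have hcf : (image f univ).card = N := by
    rw [Finset.card_image_of_injective _ hf.injective, card_univ, Fintype.card_fin]
  have e1 := Finset.orderEmbOfFin_unique hcf
    (fun x => Finset.mem_image_of_mem f (mem_univ x)) hf
  have e2 := Finset.orderEmbOfFin_unique hcf
    (fun x => h ▸ Finset.mem_image_of_mem g (mem_univ x)) hg
  funext i
  exact (congrFun e1 i).trans (congrFun e2 i).symm

lemma mem_image_of_prod {N : ℕ} {f g : Fin N → ℝ}
    (h : ∀ z : ℝ, (∏ k, (z - f k)) = ∏ k, (z - g k)) (k : Fin N) :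
    g k ∈ image f univ := by
  classical
  have h0 : ∏ j, (g k - f j) = 0 := by
    rw [h]
    exact Finset.prod_eq_zero (mem_univ k) (by ring)
  obtain ⟨j, -, hj⟩ := Finset.prod_eq_zero_iff.mp h0
  exact Finset.mem_image.mpr ⟨j, mem_univ j, by linarith⟩

/-- Uniqueness of the strictly increasing root vector. -/
lemma eq_of_prod_eq {N : ℕ} {f g : Fin N → ℝ} (hf : StrictMono f) (hg : StrictMono g)
    (h : ∀ z : ℝ, (∏ k, (z - f k)) = ∏ k, (z - g k)) : f = g := by
  apply strictMono_eq_of_image_eq hf hg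
  apply Finset.Subset.antisymm
  · exact Finset.image_subset_iff.mpr fun k _ => mem_image_of_prod (fun z => (h z).symm) k
  · exact Finset.image_subset_iff.mpr fun k _ => mem_image_of_prod h k

lemma rootMap_spec {N : ℕ} {t : ℝ} {x : Fin N → ℝ} (hx : x ∈ ANt N t) :
    StrictMono (rootMap N t x) ∧
      ∀ z : ℝ, (∏ k, (z - x k)) - t = ∏ k, (z - rootMap N t x k) := by
  obtain ⟨-, h⟩ := hx
  unfold rootMap
  rw [dif_pos h]
  exact h.choose_spec

lemma rootMap_eq {N : ℕ} {t : ℝ} {x y : Fin N → ℝ} (hx : x ∈ ANt N t) (hy : StrictMono y)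
    (h : ∀ z : ℝ, (∏ k, (z - x k)) - t = ∏ k, (z - y k)) : rootMap N t x = y := by
  obtain ⟨hm, hs⟩ := rootMap_spec hx
  exact eq_of_prod_eq hm hy fun z => by linarith [hs z, h z]

lemma rootMap_mem {N : ℕ} {t : ℝ} {x : Fin N → ℝ} (hx : x ∈ ANt N t) :
    rootMap N t x ∈ ANt N (-t) := by
  obtain ⟨hm, hs⟩ := rootMap_spec hx
  exact ⟨hm, x, hx.1, fun z => by linarith [hs z]⟩

lemma rootMap_leftInv {N : ℕ} {t : ℝ} {x : Fin N → ℝ} (hx : x ∈ ANt N t) :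
    rootMap N (-t) (rootMap N t x) = x := by
  obtain ⟨-, hs⟩ := rootMap_spec hx
  exact rootMap_eq (rootMap_mem hx) hx.1 fun z => by linarith [hs z]

lemma isOpen_strictMono (N : ℕ) : IsOpen {f : Fin N → ℝ | StrictMono f} := by
  have he : {f : Fin N → ℝ | StrictMono f} =
      ⋂ p : Fin N × Fin N, {f : Fin N → ℝ | p.1 < p.2 → f p.1 < f p.2} := by
    ext f
    simp only [Set.mem_setOf_eq, Set.mem_iInter]
    exact ⟨fun h p hp => h hp, fun h a b hab => h (a, b) hab⟩
  rw [he]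
  refine isOpen_iInter_of_finite fun p => ?_
  by_cases hp : p.1 < p.2
  · have : {f : Fin N → ℝ | p.1 < p.2 → f p.1 < f p.2}
        = {f : Fin N → ℝ | f p.1 < f p.2} := by
      ext f; simp [hp]
    rw [this]
    exact isOpen_lt (continuous_apply p.1) (continuous_apply p.2)
  · have : {f : Fin N → ℝ | p.1 < p.2 → f p.1 < f p.2} = Set.univ := by
      ext f; simp [hp]
    rw [this]
    exact isOpen_univ

/-- Equality of the "derivative sums" of two monic polynomials equal up to a constant. -/
lemma sum_erase_eq {N : ℕ} {x y : Fin N → ℝ} {t : ℝ}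
    (h : ∀ z : ℝ, (∏ k, (z - x k)) - t = ∏ k, (z - y k)) (w : ℝ) :
    ∑ j, ∏ l ∈ univ.erase j, (w - x l) = ∑ j, ∏ l ∈ univ.erase j, (w - y l) := by
  classical
  have hF1 : HasDerivAt (fun z : ℝ => ∏ j, (z - x j))
      (∑ j, ∏ l ∈ univ.erase j, (w - x l)) w := by
    simpa using HasDerivAt.fun_finsetProd
      (u := univ) (f := fun j z => z - x j) (f' := fun _ => (1 : ℝ))
      (fun i _ => (hasDerivAt_id w).sub_const (x i))
  have hF2 : HasDerivAt (fun z : ℝ => ∏ j, (z - y j))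
      (∑ j, ∏ l ∈ univ.erase j, (w - y l)) w := by
    simpa using HasDerivAt.fun_finsetProd
      (u := univ) (f := fun j z => z - y j) (f' := fun _ => (1 : ℝ))
      (fun i _ => (hasDerivAt_id w).sub_const (y i))
  have heq : (fun z : ℝ => ∏ j, (z - x j)) = fun z : ℝ => (∏ j, (z - y j)) + t :=
    funext fun z => by linarith [h z]
  have hF1' : HasDerivAt (fun z : ℝ => ∏ j, (z - x j))
      (∑ j, ∏ l ∈ univ.erase j, (w - y l)) w := by
    rw [heq]; exact hF2.add_const t
  exact hF1.unique hF1'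

/-- Smoothness of `rootMap` on `ANt`. -/
lemma rootMap_contDiffOn (N : ℕ) (t : ℝ) :
    ContDiffOn ℝ ((⊤ : ℕ∞) : WithTop ℕ∞) (rootMap N t) (ANt N t) := by
  classical
  set n : WithTop ℕ∞ := ((⊤ : ℕ∞) : WithTop ℕ∞) with hn_def
  have hn : (1 : WithTop ℕ∞) ≤ n := by
    rw [hn_def]; exact_mod_cast (le_top : (1 : ℕ∞) ≤ ⊤)
  intro x0 hx0
  obtain ⟨hm, hs⟩ := rootMap_spec hx0
  set y0 : Fin N → ℝ := rootMap N t x0 with hy0def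
  -- abbreviations
  set E := (Fin N → ℝ) × (Fin N → ℝ) with hE
  set G : E → (Fin N → ℝ) := fun p k => (∏ j, (p.2 k - p.1 j)) - t with hG
  set Φ : E → E := fun p => (p.1, G p) with hΦdef
  -- smoothness of Φ
  have hprod : ∀ (k : Fin N) (s : Finset (Fin N)),
      ContDiff ℝ n (fun p : E => ∏ j ∈ s, (p.2 k - p.1 j)) := by
    intro k s
    induction s using Finset.induction with
    | empty => simpa using contDiff_const
    | insert a s' hns ih =>
      simp only [Finset.prod_insert hns]
      exact (((ContinuousLinearMap.proj k).comp
          (ContinuousLinearMap.snd ℝ (Fin N → ℝ) (Fin N → ℝ))).contDiff.sub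
        (((ContinuousLinearMap.proj a).comp
          (ContinuousLinearMap.fst ℝ (Fin N → ℝ) (Fin N → ℝ))).contDiff)).mul ih
  have hΦ : ContDiff ℝ n Φ := by
    refine contDiff_fst.prodMk ?_
    refine contDiff_pi.mpr fun k => ?_
    exact (hprod k univ).sub contDiff_const
  -- the derivative of Φ at (x0, y0)
  set L : Fin N → Fin N → (E →L[ℝ] ℝ) := fun k j =>
    (ContinuousLinearMap.proj k).comp (ContinuousLinearMap.snd ℝ (Fin N → ℝ) (Fin N → ℝ))
      - (ContinuousLinearMap.proj j).comp
        (ContinuousLinearMap.fst ℝ (Fin N → ℝ) (Fin N → ℝ)) with hL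
  set D2 : E →L[ℝ] (Fin N → ℝ) := ContinuousLinearMap.pi
    (fun k => ∑ j, (∏ l ∈ univ.erase j, (y0 k - x0 l)) • L k j) with hD2
  set D : E →L[ℝ] E :=
    (ContinuousLinearMap.fst ℝ (Fin N → ℝ) (Fin N → ℝ)).prod D2 with hD
  have hfac : ∀ k j : Fin N, HasFDerivAt (fun p : E => p.2 k - p.1 j) (L k j) (x0, y0) := by
    intro k j
    exact ((ContinuousLinearMap.proj k).comp
        (ContinuousLinearMap.snd ℝ (Fin N → ℝ) (Fin N → ℝ))).hasFDerivAt.sub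
      ((ContinuousLinearMap.proj j).comp
        (ContinuousLinearMap.fst ℝ (Fin N → ℝ) (Fin N → ℝ))).hasFDerivAt
  have hGder : HasFDerivAt G D2 (x0, y0) := by
    rw [hD2]
    apply hasFDerivAt_pi.mpr
    intro k
    exact (HasFDerivAt.finset_prod (fun j _ => hfac k j)).sub_const t
  have hΦder : HasFDerivAt Φ D (x0, y0) := HasFDerivAt.prodMk hasFDerivAt_fst hGder
  -- value of D
  have hD2app : ∀ (u v : Fin N → ℝ) (k : Fin N),
      D2 (u, v) k = ∑ j, (∏ l ∈ univ.erase j, (y0 k - x0 l)) * (v k - u j) := by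
    intro u v k
    simp only [hD2, hL, ContinuousLinearMap.pi_apply, ContinuousLinearMap.sum_apply,
      ContinuousLinearMap.smul_apply, ContinuousLinearMap.sub_apply,
      ContinuousLinearMap.comp_apply, ContinuousLinearMap.proj_apply, smul_eq_mul]
    rfl
  -- the key sums are nonzero
  have hSk : ∀ k, ∑ j, ∏ l ∈ univ.erase j, (y0 k - x0 l)
      = ∏ l ∈ univ.erase k, (y0 k - y0 l) := by
    intro k
    rw [sum_erase_eq hs (y0 k)]
    refine Finset.sum_eq_single k (fun j _ hjk => ?_) (by simp)
    exact Finset.prod_eq_zero (Finset.mem_erase.mpr ⟨Ne.symm hjk, mem_univ k⟩) (sub_self _)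
  have hSne : ∀ k, (∑ j, ∏ l ∈ univ.erase j, (y0 k - x0 l)) ≠ 0 := by
    intro k
    rw [hSk k]
    refine Finset.prod_ne_zero_iff.mpr fun l hl => ?_
    have hlk : l ≠ k := (Finset.mem_erase.mp hl).1
    exact sub_ne_zero.mpr (hm.injective.ne (Ne.symm hlk))
  -- D is bijective
  have hker : ∀ p : E, D p = 0 → p = 0 := by
    rintro ⟨u, v⟩ hp
    have h1 : u = 0 := congrArg Prod.fst hp
    have h2 : ∀ k, D2 (u, v) k = 0 := fun k => congrFun (congrArg Prod.snd hp) k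
    have h3 : v = 0 := by
      funext k
      have := h2 k
      rw [hD2app u v k] at this
      have hu : ∀ j, u j = 0 := fun j => congrFun h1 j
      have : (∑ j, ∏ l ∈ univ.erase j, (y0 k - x0 l)) * v k = 0 := by
        rw [Finset.sum_mul] at *
        calc (∑ j, (∏ l ∈ univ.erase j, (y0 k - x0 l)) * v k)
            = ∑ j, (∏ l ∈ univ.erase j, (y0 k - x0 l)) * (v k - u j) := by
              refine Finset.sum_congr rfl fun j _ => by rw [hu j, sub_zero]
          _ = 0 := this
      exact (mul_eq_zero.mp this).resolve_left (hSne k)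
    simp [Prod.ext_iff, h1, h3]; rfl
  have hinj : Function.Injective D := by
    intro a b hab
    have := hker (a - b) (by rw [map_sub, hab, sub_self])
    exact sub_eq_zero.mp this
  have hsurj : Function.Surjective D := by
    have h := LinearMap.injective_iff_surjective (f := (D : E →ₗ[ℝ] E))
    exact h.mp hinj
  set e : E ≃L[ℝ] E :=
    LinearEquiv.toContinuousLinearEquiv (LinearEquiv.ofBijective (D : E →ₗ[ℝ] E) ⟨hinj, hsurj⟩)
    with he_def
  have hecoe : (e : E →L[ℝ] E) = D := by
    exact ContinuousLinearMap.ext fun p => rfl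
  have hΦder' : HasFDerivAt Φ (e : E →L[ℝ] E) (x0, y0) := by rw [hecoe]; exact hΦder
  -- inverse function theorem
  have hΦat : ContDiffAt ℝ n Φ (x0, y0) := hΦ.contDiffAt
  set Ψ : E → E := hΦat.localInverse hΦder' (zero_lt_one.trans_le hn).ne' with hΨdef
  have hΨsm : ContDiffAt ℝ n Ψ (Φ (x0, y0)) := hΦat.to_localInverse hΦder' (zero_lt_one.trans_le hn).ne'
  have HS := hΦat.hasStrictFDerivAt' hΦder' (zero_lt_one.trans_le hn).ne'
  have hΨeq : Ψ = HS.localInverse Φ e (x0, y0) := rfl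
  -- Φ (x0, y0) = (x0, 0)
  have hG0 : G (x0, y0) = 0 := by
    funext k
    have : (∏ j, (y0 k - x0 j)) - t = ∏ j, (y0 k - y0 j) := hs (y0 k)
    have hz : (∏ j, (y0 k - y0 j)) = 0 :=
      Finset.prod_eq_zero (mem_univ k) (sub_self _)
    simp only [hG]
    rw [this, hz]; rfl
  have hΦp0 : Φ (x0, y0) = (x0, 0) := by
    simp only [hΦdef, hG0]
  -- local facts
  have hΨ0 : Ψ (x0, 0) = (x0, y0) := by
    rw [← hΦp0, hΨeq]
    exact HS.localInverse_apply_image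
  have hcont0 : ContinuousAt (fun x : Fin N → ℝ => ((x, 0) : E)) x0 :=
    (continuous_id.prodMk continuous_const).continuousAt
  have hΨcont : ContinuousAt Ψ (x0, 0) := by
    rw [← hΦp0, hΨeq]; exact HS.localInverse_continuousAt
  have hmono_ev : ∀ᶠ x in nhds x0, StrictMono (Ψ (x, 0)).2 := by
    have hc1 : ContinuousAt (fun x : Fin N → ℝ => Ψ (x, 0)) x0 :=
      ContinuousAt.comp (g := Ψ) (f := fun x : Fin N → ℝ => ((x, 0) : E)) hΨcont hcont0
    have hc : ContinuousAt (fun x : Fin N → ℝ => (Ψ (x, 0)).2) x0 :=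
      ContinuousAt.comp (g := Prod.snd) (f := fun x : Fin N → ℝ => Ψ (x, 0))
        continuous_snd.continuousAt hc1
    have hy0m : (fun x : Fin N → ℝ => (Ψ (x, 0)).2) x0 ∈ {f : Fin N → ℝ | StrictMono f} := by
      simp only [hΨ0]; exact hm
    exact hc ((isOpen_strictMono N).mem_nhds hy0m)
  have hrinv_ev : ∀ᶠ x in nhds x0, Φ (Ψ (x, 0)) = (x, 0) := by
    have h1 : ∀ᶠ q in nhds ((x0, 0) : E), Φ (Ψ q) = q := by
      rw [← hΦp0, hΨeq]; exact HS.eventually_right_inverse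
    exact hcont0 h1
  -- eventual agreement with rootMap on ANt
  have heq : ∀ᶠ x in nhdsWithin x0 (ANt N t),
      (fun x => (Ψ (x, 0)).2) x = rootMap N t x := by
    filter_upwards [(hrinv_ev.and hmono_ev).filter_mono nhdsWithin_le_nhds,
      self_mem_nhdsWithin] with x hx hxA
    obtain ⟨h1, h2⟩ := hx
    obtain ⟨hm', hs'⟩ := rootMap_spec hxA
    set b : Fin N → ℝ := (Ψ (x, 0)).2 with hb
    have ha : (Ψ (x, 0)).1 = x := congrArg Prod.fst h1
    have hGb : ∀ k, (∏ j, (b k - x j)) - t = 0 := by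
      intro k
      have := congrFun (congrArg Prod.snd h1) k
      simp only [hΦdef, hG] at this
      rw [ha] at this
      exact this
    have hroot : ∀ k, b k ∈ image (rootMap N t x) univ := by
      intro k
      have h0 : ∏ j, (b k - rootMap N t x j) = 0 := by
        rw [← hs' (b k)]; exact hGb k
      obtain ⟨j, -, hj⟩ := Finset.prod_eq_zero_iff.mp h0
      exact Finset.mem_image.mpr ⟨j, mem_univ j, by linarith⟩
    have himsub : image b univ ⊆ image (rootMap N t x) univ :=
      Finset.image_subset_iff.mpr fun k _ => hroot k
    have hcardb : (image b univ).card = N := by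
      rw [Finset.card_image_of_injective _ h2.injective, card_univ, Fintype.card_fin]
    have hcardr : (image (rootMap N t x) univ).card = N := by
      rw [Finset.card_image_of_injective _ hm'.injective, card_univ, Fintype.card_fin]
    have him : image b univ = image (rootMap N t x) univ :=
      Finset.eq_of_subset_of_card_le himsub (by rw [hcardb, hcardr])
    exact strictMono_eq_of_image_eq h2 hm' him
  -- conclude
  have hφ : ContDiffAt ℝ n (fun x : Fin N → ℝ => (Ψ (x, 0)).2) x0 := by
    have h1 : ContDiffAt ℝ n Ψ ((x0, 0) : E) := by rw [← hΦp0]; exact hΨsm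
    have h2 : ContDiffAt ℝ n (fun x : Fin N → ℝ => ((x, 0) : E)) x0 :=
      (contDiff_id.prodMk contDiff_const).contDiffAt
    exact contDiff_snd.contDiffAt.comp _ (h1.comp x0 h2)
  refine (hφ.contDiffWithinAt).congr_of_eventuallyEq ?_ ?_
  · exact heq.mono fun x hx => hx.symm
  · show rootMap N t x0 = (Ψ (x0, 0)).2
    rw [hΨ0]

/-- **Diffeomorphism between root sets**: `y^t` maps `A_N(t)` into `A_N(−t)`, is a
bijection `A_N(t) → A_N(−t)`, is `C^∞` on `A_N(t)` with `C^∞` inverse `y^{−t}`. -/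
theorem rootMap_diffeo (N : ℕ) (hN : 1 ≤ N) (t : ℝ) :
    (∀ x ∈ ANt N t, rootMap N t x ∈ ANt N (-t)) ∧
    Set.BijOn (rootMap N t) (ANt N t) (ANt N (-t)) ∧
    ContDiffOn ℝ ((⊤ : ℕ∞) : WithTop ℕ∞) (rootMap N t) (ANt N t) ∧
    ContDiffOn ℝ ((⊤ : ℕ∞) : WithTop ℕ∞) (rootMap N (-t)) (ANt N (-t)) ∧
    (∀ x ∈ ANt N t, rootMap N (-t) (rootMap N t x) = x) ∧
    (∀ y ∈ ANt N (-t), rootMap N t (rootMap N (-t) y) = y) := by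
  have hlinv : ∀ x ∈ ANt N t, rootMap N (-t) (rootMap N t x) = x :=
    fun x hx => rootMap_leftInv hx
  have hrinv : ∀ y ∈ ANt N (-t), rootMap N t (rootMap N (-t) y) = y := by
    intro y hy
    have := rootMap_leftInv (t := -t) hy
    rwa [neg_neg] at this
  refine ⟨fun x hx => rootMap_mem hx, ⟨fun x hx => rootMap_mem hx, ?_, ?_⟩,
    rootMap_contDiffOn N t, rootMap_contDiffOn N (-t), hlinv, hrinv⟩
  · intro a ha b hb hab
    have := hlinv a ha
    rw [hab, hlinv b hb] at this
    exact this.symm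
  · intro y hy
    refine ⟨rootMap N (-t) y, ?_, hrinv y hy⟩
    have := rootMap_mem hy
    rwa [neg_neg] at this
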